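/- In any maximal independent set S of a path graph P on 5 vertices, even if one endpoint of the path is additionally adjacent to an external vertex that is in the independent set, at least 2 vertices of P belong to S. Formally: let G be a graph containing an induced path v_1—v_2—v_3—v_4—v_5 where v_2, v_3, v_4, v_5 have no neighbors outside the path and v_1 has at most one additional neighbor a outside the path; then any maximal independent set of G contains at least 2 of the vertices v_1,...,v_5. -/
import Mathlib


open Classical in
/-- **A pendant path of 5 vertices contributes at least 2 MIS members.**
Let `G` contain an induced path `v 0 — v 1 — v 2 — v 3 — v 4` such that
`v 1, v 2, v 3, v 4` have no neighbors outside the path, and the endpoint `v 0` has at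
most one additional neighbor `a` outside the path (which may well be in the independent
set).  Then any maximal independent set `S` of `G` contains at least 2 of the vertices
`v 0, ..., v 4`. -/
theorem path_gadget_two_mis_members {V : Type*} (G : SimpleGraph V)
    (v : Fin 5 → V) (hinj : Function.Injective v) (a : V) (ha : a ∉ Set.range v)
    (hpath : ∀ i : Fin 4, G.Adj (v i.castSucc) (v i.succ))
    (hinduced : ∀ i j : Fin 5, i.val + 1 < j.val → ¬ G.Adj (v i) (v j))
    (hclosed : ∀ i : Fin 5, i ≠ 0 → ∀ w, G.Adj (v i) w → w ∈ Set.range v)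
    (hend : ∀ w, G.Adj (v 0) w → w ∈ Set.range v ∨ w = a)
    (S : Set V)
    (hindep : ∀ x ∈ S, ∀ y ∈ S, ¬ G.Adj x y)
    (hmaximal : ∀ x ∉ S, ∃ y ∈ S, G.Adj x y) :
    2 ≤ (Finset.univ.filter fun i : Fin 5 => v i ∈ S).card := by
  -- adjacency between path vertices implies consecutive indices
  have adj_idx : ∀ i j : Fin 5, G.Adj (v i) (v j) →
      (i.val + 1 = j.val ∨ j.val + 1 = i.val) := by
    intro i j h
    rcases lt_trichotomy i.val j.val with hlt | heq | hgt
    · left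
      by_contra hne
      exact hinduced i j (by omega) h
    · exact absurd (Fin.ext heq : i = j) (fun hij => h.ne (congrArg v hij))
    · right
      by_contra hne
      exact hinduced j i (by omega) h.symm
  have key : ∃ i j : Fin 5, i ≠ j ∧ v i ∈ S ∧ v j ∈ S := by
    have h34 : G.Adj (v 3) (v 4) := hpath 3
    have h23 : G.Adj (v 2) (v 3) := hpath 2
    have h12 : G.Adj (v 1) (v 2) := hpath 1
    by_cases h4 : v 4 ∈ S
    · by_cases h2 : v 2 ∈ S
      · exact ⟨2, 4, by decide, h2, h4⟩
      · obtain ⟨y, hyS, hy⟩ := hmaximal (v 2) h2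
        obtain ⟨j, rfl⟩ := hclosed 2 (by decide) y hy
        rcases adj_idx 2 j hy with hj | hj
        · have : j = (3 : Fin 5) := Fin.ext (by simpa using hj.symm)
          subst this
          exact absurd h34 (hindep _ hyS _ h4)
        · have : j = (1 : Fin 5) := Fin.ext (by simpa using hj)
          subst this
          exact ⟨1, 4, by decide, hyS, h4⟩
    · obtain ⟨y, hyS, hy⟩ := hmaximal (v 4) h4
      obtain ⟨j, rfl⟩ := hclosed 4 (by decide) y hy
      rcases adj_idx 4 j hy with hj | hj
      · exact absurd hj (by omega)
      · have : j = (3 : Fin 5) := Fin.ext (by omega)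
        subst this
        -- v 3 ∈ S, so v 2 ∉ S
        have h2 : v 2 ∉ S := fun h2 => hindep _ h2 _ hyS h23
        by_cases h1 : v 1 ∈ S
        · exact ⟨1, 3, by decide, h1, hyS⟩
        · obtain ⟨z, hzS, hz⟩ := hmaximal (v 1) h1
          obtain ⟨k, rfl⟩ := hclosed 1 (by decide) z hz
          rcases adj_idx 1 k hz with hk | hk
          · have : k = (2 : Fin 5) := Fin.ext (by simpa using hk.symm)
            subst this
            exact absurd hzS h2
          · have : k = (0 : Fin 5) := Fin.ext (by omega)
            subst this
            exact ⟨0, 3, by decide, hzS, hyS⟩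
  obtain ⟨i, j, hij, hi, hj⟩ := key
  refine Finset.one_lt_card.2 ⟨i, ?_, j, ?_, hij⟩ <;>
    simp [Finset.mem_filter, hi, hj]
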